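/- Upper bound on the size of the exponential: for an opponent game G with at least one player-originating edge (e_p[G] > 0), the number of leaves of !G is at most e_o[G]! · e_p[G]^{e_o[G]}, where e_o and e_p count the edges leaving opponent and player nodes respectively; consequently the edge count of !G is at most 2·e_o[G]·e_o[G]!·e_p[G]^{e_o[G]}. -/

import Mathlib

/-- Rose trees: the unlabeled shape of a game tree. -/
inductive RTree : Type where
  | node : List RTree → RTree

mutual
/-- An opponent game: a finite list of player games (its children). -/
inductive OGame : Type where
  | mk : List PGame → OGame
/-- A player game: a finite list of opponent games (its children). -/
inductive PGame : Type where
  | mk : List OGame → PGame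
end

mutual
/-- The dual of an opponent game. -/
def OGame.dual : OGame → PGame
  | .mk ps => .mk (ps.attach.map fun ⟨p, _⟩ => p.dual)
/-- The dual of a player game. -/
def PGame.dual : PGame → OGame
  | .mk os => .mk (os.attach.map fun ⟨o, _⟩ => o.dual)
end

mutual
/-- Strategy existence in an opponent game: a conjunction over children. -/
def OGame.strat : OGame → Bool
  | .mk ps => ps.attach.all fun ⟨p, _⟩ => p.strat
/-- Strategy existence in a player game: a disjunction over children. -/
def PGame.strat : PGame → Bool
  | .mk os => os.attach.any fun ⟨o, _⟩ => o.strat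
end

mutual
/-- Tensor of opponent games: `O ⊗ O' = (P_i ⊗ˡ O', O ⊗ʳ P'_k | …)`. -/
def otimes : OGame → OGame → OGame
  | .mk ps, .mk qs => .mk ((ps.attach.map fun ⟨p, _⟩ => oxl p (.mk qs)) ++
      (qs.attach.map fun ⟨q, _⟩ => oxr (.mk ps) q))
  termination_by o o' => sizeOf o + sizeOf o'
  decreasing_by
  · have := List.sizeOf_lt_of_mem ‹p ∈ ps›; simp_all; omega
  · have := List.sizeOf_lt_of_mem ‹q ∈ qs›; simp_all; omega
/-- Mixed tensor `O ⊗ʳ P = {O ⊗ O_j | j ∈ J}`. -/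
def oxr : OGame → PGame → PGame
  | o, .mk os => .mk (os.attach.map fun ⟨oj, _⟩ => otimes o oj)
  termination_by o p => sizeOf o + sizeOf p
  decreasing_by
  · have := List.sizeOf_lt_of_mem ‹oj ∈ os›; simp_all; omega
/-- Mixed tensor `P ⊗ˡ O = {O_j ⊗ O | j ∈ J}`. -/
def oxl : PGame → OGame → PGame
  | .mk os, o => .mk (os.attach.map fun ⟨oj, _⟩ => otimes oj o)
  termination_by p o => sizeOf p + sizeOf o
  decreasing_by
  · have := List.sizeOf_lt_of_mem ‹oj ∈ os›; simp_all; omega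
end

mutual
/-- Par of player games: `P ⅋ P' = {O_j ⅋ˡ P', P ⅋ʳ O'_k | …}`. -/
def parr : PGame → PGame → PGame
  | .mk os, .mk qs => .mk ((os.attach.map fun ⟨o, _⟩ => parrOP o (.mk qs)) ++
      (qs.attach.map fun ⟨q, _⟩ => parrPO (.mk os) q))
  termination_by p p' => sizeOf p + sizeOf p'
  decreasing_by
  · have := List.sizeOf_lt_of_mem ‹o ∈ os›; simp_all; omega
  · have := List.sizeOf_lt_of_mem ‹q ∈ qs›; simp_all; omega
/-- Mixed par `P ⅋ʳ O = (P ⅋ P_i | i ∈ I)`. -/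
def parrPO : PGame → OGame → OGame
  | p, .mk ps => .mk (ps.attach.map fun ⟨pi, _⟩ => parr p pi)
  termination_by p o => sizeOf p + sizeOf o
  decreasing_by
  · have := List.sizeOf_lt_of_mem ‹pi ∈ ps›; simp_all; omega
/-- Mixed par `O ⅋ˡ P = (P_i ⅋ P | i ∈ I)`. -/
def parrOP : OGame → PGame → OGame
  | .mk ps, p => .mk (ps.attach.map fun ⟨pi, _⟩ => parr pi p)
  termination_by o p => sizeOf o + sizeOf p
  decreasing_by
  · have := List.sizeOf_lt_of_mem ‹pi ∈ ps›; simp_all; omega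
end

mutual
/-- The exponential `!O`: `!() = ()` and `!O = ⊗_{i∈I} (b_i : !'P_i)` for `I ≠ ∅`. -/
def bang : OGame → OGame
  | .mk [] => .mk []
  | .mk (p :: ps) =>
      (ps.attach.map fun ⟨q, _⟩ => OGame.mk [bang' q]).foldl otimes (OGame.mk [bang' p])
/-- The auxiliary exponential `!'{a_j : O_j} = {a_j : !O_j}`. -/
def bang' : PGame → PGame
  | .mk os => .mk (os.attach.map fun ⟨o, _⟩ => bang o)
end

mutual
/-- Underlying unlabeled tree of an opponent game. -/
def OGame.toTree : OGame → RTree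
  | .mk ps => .node (ps.attach.map fun ⟨p, _⟩ => p.toTree)
/-- Underlying unlabeled tree of a player game. -/
def PGame.toTree : PGame → RTree
  | .mk os => .node (os.attach.map fun ⟨o, _⟩ => o.toTree)
end

/-- Number of nodes (including the root). -/
def RTree.nodes : RTree → ℕ
  | .node cs => 1 + (cs.attach.map fun ⟨c, _⟩ => c.nodes).sum

/-- Number of parent-child edges. -/
def RTree.edges : RTree → ℕ
  | .node cs => cs.length + (cs.attach.map fun ⟨c, _⟩ => c.edges).sum

/-- Number of leaves. -/
def RTree.leaves : RTree → ℕ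
  | .node [] => 1
  | .node cs => (cs.attach.map fun ⟨c, _⟩ => c.leaves).sum

/-- Uniform size: `u[leaf] = 0`, `u[node with n children] = (n-1) + Σ u[child]`. -/
def RTree.usize : RTree → ℕ
  | .node [] => 0
  | .node cs => (cs.length - 1) + (cs.attach.map fun ⟨c, _⟩ => c.usize).sum

/-- Depth: leaves have depth 0. -/
def RTree.depth : RTree → ℕ
  | .node cs => (cs.attach.map fun ⟨c, _⟩ => c.depth + 1).foldr max 0

/-- `profile t k` is the number of nodes of `t` at depth `k`. -/
def RTree.profile : RTree → ℕ → ℕ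
  | _, 0 => 1
  | .node cs, k + 1 => (cs.attach.map fun ⟨c, _⟩ => c.profile k).sum

mutual
/-- Number of player nodes of an opponent game. -/
def OGame.pnodes : OGame → ℕ
  | .mk ps => (ps.attach.map fun ⟨p, _⟩ => p.pnodes).sum
/-- Number of player nodes of a player game (the root counts). -/
def PGame.pnodes : PGame → ℕ
  | .mk os => 1 + (os.attach.map fun ⟨o, _⟩ => o.pnodes).sum
end

mutual
/-- Number of edges leaving opponent nodes, for an opponent game. -/
def OGame.eo : OGame → ℕ
  | .mk ps => ps.length + (ps.attach.map fun ⟨p, _⟩ => p.eo).sum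
/-- Number of edges leaving opponent nodes, for a player game. -/
def PGame.eo : PGame → ℕ
  | .mk os => (os.attach.map fun ⟨o, _⟩ => o.eo).sum
end

mutual
/-- Number of edges leaving player nodes, for an opponent game. -/
def OGame.ep : OGame → ℕ
  | .mk ps => (ps.attach.map fun ⟨p, _⟩ => p.ep).sum
/-- Number of edges leaving player nodes, for a player game. -/
def PGame.ep : PGame → ℕ
  | .mk os => os.length + (os.attach.map fun ⟨o, _⟩ => o.ep).sum
end

/-- `γ(i,j) = 1` if `i` or `j` is zero or even, else `0`. -/
def gammaCoef (i j : ℕ) : ℕ :=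
  if i = 0 ∨ j = 0 ∨ i % 2 = 0 ∨ j % 2 = 0 then 1 else 0

mutual
/-- The single-branch player chain `L_n`. -/
def Lp : ℕ → PGame
  | 0 => .mk []
  | n + 1 => .mk [Lo n]
/-- The single-branch opponent chain `L'_n`. -/
def Lo : ℕ → OGame
  | 0 => .mk []
  | n + 1 => .mk [Lp n]
end
/-! ### Arithmetic helpers -/

theorem fact_mul_fact_le {a b : ℕ} (s : ℕ) (h : a ≤ b) :
    (a + s).factorial * b.factorial ≤ (b + s).factorial * a.factorial := by
  induction s with
  | zero =>
      simpa [Nat.mul_comm] using Nat.mul_le_mul_right a.factorial (Nat.factorial_le h)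
  | succ s ih =>
      have h1 : a + (s+1) = (a+s) + 1 := by omega
      have h2 : b + (s+1) = (b+s) + 1 := by omega
      rw [h1, h2, Nat.factorial_succ, Nat.factorial_succ]
      calc (a + s + 1) * (a+s).factorial * b.factorial
          = (a + s + 1) * ((a+s).factorial * b.factorial) := by ring
        _ ≤ (b + s + 1) * ((b+s).factorial * a.factorial) :=
            Nat.mul_le_mul (by omega) ih
        _ = (b + s + 1) * (b+s).factorial * a.factorial := by ring

/-- Upgrade the second binomial index. -/
theorem upgrade₂ {X Y a c d : ℕ} (h : X * a.factorial * c.factorial ≤ (a + c).factorial * Y)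
    (hcd : c ≤ d) : X * a.factorial * d.factorial ≤ (a + d).factorial * Y := by
  have h2 : (c + a).factorial * d.factorial ≤ (d + a).factorial * c.factorial :=
    fact_mul_fact_le a hcd
  have key : (X * a.factorial * d.factorial) * c.factorial ≤ ((a + d).factorial * Y) * c.factorial := by
    calc (X * a.factorial * d.factorial) * c.factorial
        = (X * a.factorial * c.factorial) * d.factorial := by ring
      _ ≤ ((a + c).factorial * Y) * d.factorial := Nat.mul_le_mul_right _ h
      _ = ((c + a).factorial * d.factorial) * Y := by rw [Nat.add_comm a c]; ring
      _ ≤ ((d + a).factorial * c.factorial) * Y := Nat.mul_le_mul_right _ h2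
      _ = ((a + d).factorial * Y) * c.factorial := by rw [Nat.add_comm d a]; ring
  exact Nat.le_of_mul_le_mul_right key c.factorial_pos

/-- Upgrade the first binomial index. -/
theorem upgrade₁ {X Y a c d : ℕ} (h : X * c.factorial * a.factorial ≤ (c + a).factorial * Y)
    (hcd : c ≤ d) : X * d.factorial * a.factorial ≤ (d + a).factorial * Y := by
  have h' : X * a.factorial * c.factorial ≤ (a + c).factorial * Y := by
    rw [Nat.add_comm a c]; calc X * a.factorial * c.factorial
        = X * c.factorial * a.factorial := by ring
      _ ≤ (c + a).factorial * Y := h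
  have := upgrade₂ h' hcd
  calc X * d.factorial * a.factorial = X * a.factorial * d.factorial := by ring
    _ ≤ (a + d).factorial * Y := this
    _ = (d + a).factorial * Y := by rw [Nat.add_comm a d]

theorem fact_asc2 {a b c d : ℕ} (hab : a ≤ b) (hcd : c ≤ d) :
    (a + c).factorial * b.factorial * d.factorial
      ≤ (b + d).factorial * a.factorial * c.factorial := by
  have h1 : (a + c).factorial * b.factorial ≤ (b + c).factorial * a.factorial :=
    fact_mul_fact_le c hab
  have h2 : (c + b).factorial * d.factorial ≤ (d + b).factorial * c.factorial :=
    fact_mul_fact_le b hcd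
  calc (a + c).factorial * b.factorial * d.factorial
      ≤ (b + c).factorial * a.factorial * d.factorial :=
        Nat.mul_le_mul_right _ h1
    _ = ((c + b).factorial * d.factorial) * a.factorial := by rw [Nat.add_comm b c]; ring
    _ ≤ ((d + b).factorial * c.factorial) * a.factorial := Nat.mul_le_mul_right _ h2
    _ = (b + d).factorial * a.factorial * c.factorial := by rw [Nat.add_comm d b]; ring

/-- Monotonicity of the multinomial coefficient, in multiplied form. -/
theorem multi_mono : ∀ (l : List (ℕ × ℕ)), (∀ x ∈ l, x.1 ≤ x.2) →
    ((l.map Prod.fst).sum).factorial * (l.map (fun x => (x.2).factorial)).prod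
      ≤ ((l.map Prod.snd).sum).factorial * (l.map (fun x => (x.1).factorial)).prod
  | [], _ => le_refl _
  | (s, t) :: l, h => by
      have hst : s ≤ t := h (s, t) (List.mem_cons_self)
      have ih := multi_mono l (fun x hx => h x (List.mem_cons_of_mem _ hx))
      have hS : (l.map Prod.fst).sum ≤ (l.map Prod.snd).sum :=
        List.sum_le_sum (fun x hx => h x (List.mem_cons_of_mem _ hx))
      set S1 := (l.map Prod.fst).sum
      set S2 := (l.map Prod.snd).sum
      set P1 := (l.map (fun x => (x.1).factorial)).prod
      set P2 := (l.map (fun x => (x.2).factorial)).prod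
      have asc : (s + S1).factorial * t.factorial * S2.factorial
          ≤ (t + S2).factorial * s.factorial * S1.factorial := fact_asc2 hst hS
      have key : ((s + S1).factorial * (t.factorial * P2)) * (S1.factorial * S2.factorial)
          ≤ ((t + S2).factorial * (s.factorial * P1)) * (S1.factorial * S2.factorial) := by
        calc ((s + S1).factorial * (t.factorial * P2)) * (S1.factorial * S2.factorial)
            = ((s + S1).factorial * t.factorial * S2.factorial) * (S1.factorial * P2) := by ring
          _ ≤ ((t + S2).factorial * s.factorial * S1.factorial) * (S2.factorial * P1) := by
              exact Nat.mul_le_mul asc ih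
          _ = ((t + S2).factorial * (s.factorial * P1)) * (S1.factorial * S2.factorial) := by ring
      simp only [List.map_cons, List.sum_cons, List.prod_cons]
      exact Nat.le_of_mul_le_mul_right key (Nat.mul_pos S1.factorial_pos S2.factorial_pos)

/-! ### List helpers -/

theorem le_foldr_max {l : List ℕ} {a : ℕ} (h : a ∈ l) : a ≤ l.foldr max 0 := by
  induction l with
  | nil => cases h
  | cons b l ih =>
      rcases List.mem_cons.1 h with rfl | h
      · exact le_max_left _ _
      · exact le_trans (ih h) (le_max_right _ _)

theorem foldr_max_le {l : List ℕ} {K : ℕ} (h : ∀ a ∈ l, a ≤ K) : l.foldr max 0 ≤ K := by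
  induction l with
  | nil => exact Nat.zero_le _
  | cons b l ih =>
      exact max_le (h b (List.mem_cons_self)) (ih fun a ha => h a (List.mem_cons_of_mem _ ha))

theorem le_sum_of_mem {l : List ℕ} {a : ℕ} (h : a ∈ l) : a ≤ l.sum :=
  List.single_le_sum (fun x _ => Nat.zero_le x) a h

theorem prod_le_prod_of_le {α : Type*} : ∀ (l : List α) (f g : α → ℕ),
    (∀ x ∈ l, f x ≤ g x) → (l.map f).prod ≤ (l.map g).prod
  | [], _, _, _ => le_refl _
  | a :: l, f, g, h => by
      simp only [List.map_cons, List.prod_cons]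
      exact Nat.mul_le_mul (h a (List.mem_cons_self))
        (prod_le_prod_of_le l f g fun x hx => h x (List.mem_cons_of_mem _ hx))

theorem prod_map_mul_pow {α : Type*} (M : ℕ) : ∀ (l : List α) (f g : α → ℕ),
    (l.map (fun x => f x * M ^ g x)).prod = (l.map f).prod * M ^ (l.map g).sum
  | [], _, _ => by simp
  | a :: l, f, g => by
      simp only [List.map_cons, List.prod_cons, List.sum_cons, prod_map_mul_pow M l f g, pow_add]
      ring

theorem sum_map_add_ones {α : Type*} : ∀ (l : List α) (f : α → ℕ),
    (l.map (fun x => f x + 1)).sum = (l.map f).sum + l.length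
  | [], _ => by simp
  | a :: l, f => by
      simp only [List.map_cons, List.sum_cons, List.length_cons, sum_map_add_ones l f]; omega

theorem sum_map_le_length_mul {α : Type*} {l : List α} {f : α → ℕ} {c : ℕ}
    (h : ∀ x ∈ l, f x ≤ c) : (l.map f).sum ≤ l.length * c := by
  induction l with
  | nil => simp
  | cons a l ih =>
      simp only [List.map_cons, List.sum_cons, List.length_cons]
      have h1 := ih fun x hx => h x (List.mem_cons_of_mem _ hx)
      have h2 := h a (List.mem_cons_self)
      calc f a + (List.map f l).sum ≤ c + l.length * c := Nat.add_le_add h2 h1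
        _ = (l.length + 1) * c := by ring

theorem length_le_sum_map {α : Type*} {l : List α} {f : α → ℕ}
    (h : ∀ x ∈ l, 1 ≤ f x) : l.length ≤ (l.map f).sum := by
  induction l with
  | nil => simp
  | cons a l ih =>
      simp only [List.map_cons, List.sum_cons, List.length_cons]
      have := ih fun x hx => h x (List.mem_cons_of_mem _ hx)
      have := h a (List.mem_cons_self)
      omega

theorem prod_fact_pos {α : Type*} (l : List α) (f : α → ℕ) :
    0 < (l.map (fun x => (f x).factorial)).prod :=
  List.prod_pos (by simp only [List.mem_map]; rintro a ⟨x, _, rfl⟩; exact (f x).factorial_pos)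
/-! ### Opponent height -/

mutual
/-- Max number of opponent edges on a root-leaf path (opponent game). -/
def OGame.oh : OGame → ℕ
  | .mk ps => (ps.attach.map fun ⟨p, _⟩ => p.oh + 1).foldr max 0
/-- Max number of opponent edges on a root-leaf path (player game). -/
def PGame.oh : PGame → ℕ
  | .mk os => (os.attach.map fun ⟨o, _⟩ => o.oh).foldr max 0
end

theorem OGame.oh_mk (ps : List PGame) :
    (OGame.mk ps).oh = (ps.map fun p => p.oh + 1).foldr max 0 := by
  rw [OGame.oh]; simp

theorem PGame.oh_mk (os : List OGame) :
    (PGame.mk os).oh = (os.map fun o => o.oh).foldr max 0 := by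
  rw [PGame.oh]; simp

/-! ### Equation lemmas avoiding `attach` -/

theorem OGame.toTree_mk (ps : List PGame) :
    (OGame.mk ps).toTree = .node (ps.map PGame.toTree) := by
  rw [OGame.toTree]; simp

theorem PGame.toTree_mk (os : List OGame) :
    (PGame.mk os).toTree = .node (os.map OGame.toTree) := by
  rw [PGame.toTree]; simp

theorem OGame.eo_mk (ps : List PGame) :
    (OGame.mk ps).eo = ps.length + (ps.map PGame.eo).sum := by
  rw [OGame.eo]; simp

theorem PGame.eo_mk (os : List OGame) :
    (PGame.mk os).eo = (os.map OGame.eo).sum := by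
  rw [PGame.eo]; simp

theorem OGame.ep_mk (ps : List PGame) :
    (OGame.mk ps).ep = (ps.map PGame.ep).sum := by
  rw [OGame.ep]; simp

theorem PGame.ep_mk (os : List OGame) :
    (PGame.mk os).ep = os.length + (os.map OGame.ep).sum := by
  rw [PGame.ep]; simp

theorem otimes_mk (ps qs : List PGame) :
    otimes (.mk ps) (.mk qs) = .mk ((ps.map fun p => oxl p (.mk qs)) ++
      (qs.map fun q => oxr (.mk ps) q)) := by
  rw [otimes]; simp

theorem oxr_mk (o : OGame) (os : List OGame) :
    oxr o (.mk os) = .mk (os.map fun oj => otimes o oj) := by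
  rw [oxr]; simp

theorem oxl_mk (os : List OGame) (o : OGame) :
    oxl (.mk os) o = .mk (os.map fun oj => otimes oj o) := by
  rw [oxl]; simp

theorem bang_nil : bang (.mk []) = .mk [] := by rw [bang]

theorem bang_cons (p : PGame) (ps : List PGame) :
    bang (.mk (p :: ps)) = (ps.map fun q => OGame.mk [bang' q]).foldl otimes
      (OGame.mk [bang' p]) := by
  rw [bang]; simp

theorem bang'_mk (os : List OGame) :
    bang' (.mk os) = .mk (os.map fun o => bang o) := by
  rw [bang']; simp

theorem RTree.leaves_nil : (RTree.node []).leaves = 1 := by rw [RTree.leaves]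

theorem RTree.leaves_cons (c : RTree) (cs : List RTree) :
    (RTree.node (c :: cs)).leaves = ((c :: cs).map RTree.leaves).sum := by
  rw [RTree.leaves] <;> simp

theorem RTree.edges_node (cs : List RTree) :
    (RTree.node cs).edges = cs.length + (cs.map RTree.edges).sum := by
  rw [RTree.edges]; simp

theorem RTree.depth_node (cs : List RTree) :
    (RTree.node cs).depth = (cs.map fun c => c.depth + 1).foldr max 0 := by
  rw [RTree.depth]; simp

/-! ### Basic tree facts -/

theorem RTree.leaves_pos : (t : RTree) → 0 < t.leaves
  | .node [] => by rw [RTree.leaves_nil]; exact Nat.one_pos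
  | .node (c :: cs) => by
      rw [RTree.leaves_cons]
      have := RTree.leaves_pos c
      simp only [List.map_cons, List.sum_cons]
      omega

theorem RTree.depth_child_lt {c : RTree} {cs : List RTree} (h : c ∈ cs) :
    c.depth + 1 ≤ (RTree.node cs).depth := by
  rw [RTree.depth_node]
  exact le_foldr_max (List.mem_map_of_mem h)

theorem RTree.edges_le_depth_mul_leaves : (t : RTree) → t.edges ≤ t.depth * t.leaves
  | .node [] => by rw [RTree.edges_node]; simp
  | .node (c :: cs) => by
      have hd : 1 ≤ (RTree.node (c :: cs)).depth :=
        le_trans (Nat.le_add_left 1 c.depth) (RTree.depth_child_lt (List.mem_cons_self))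
      obtain ⟨D, hD⟩ : ∃ D, (RTree.node (c :: cs)).depth = D + 1 :=
        ⟨(RTree.node (c :: cs)).depth - 1, by omega⟩
      have hsum : ((c :: cs).map RTree.edges).sum ≤ ((c :: cs).map RTree.leaves).sum * D := by
        rw [← List.sum_map_mul_right]
        apply List.sum_le_sum
        intro x hx
        have h1 := RTree.edges_le_depth_mul_leaves x
        have h2 : x.depth + 1 ≤ (RTree.node (c :: cs)).depth := RTree.depth_child_lt hx
        calc x.edges ≤ x.depth * x.leaves := h1
          _ ≤ D * x.leaves := by
              rw [hD] at h2
              exact Nat.mul_le_mul_right _ (by omega)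
          _ = x.leaves * D := Nat.mul_comm _ _
      have hlen : (c :: cs).length ≤ ((c :: cs).map RTree.leaves).sum :=
        length_le_sum_map fun x _ => RTree.leaves_pos x
      rw [RTree.edges_node, hD, RTree.leaves_cons]
      calc (c :: cs).length + ((c :: cs).map RTree.edges).sum
          ≤ ((c :: cs).map RTree.leaves).sum + ((c :: cs).map RTree.leaves).sum * D :=
            Nat.add_le_add hlen hsum
        _ = (D + 1) * ((c :: cs).map RTree.leaves).sum := by ring
termination_by t => sizeOf t
decreasing_by have := List.sizeOf_lt_of_mem hx; simp_all; omega
/-! ### Game-level shape lemmas -/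

theorem OGame.oh_child {p : PGame} {ps : List PGame} (h : p ∈ ps) :
    p.oh + 1 ≤ (OGame.mk ps).oh := by
  rw [OGame.oh_mk]; exact le_foldr_max (List.mem_map_of_mem h)

theorem PGame.oh_child {o : OGame} {os : List OGame} (h : o ∈ os) :
    o.oh ≤ (PGame.mk os).oh := by
  rw [PGame.oh_mk]; exact le_foldr_max (List.mem_map_of_mem h)

theorem OGame.leaves_eq {ps : List PGame} (h : ps ≠ []) :
    (OGame.mk ps).toTree.leaves = (ps.map fun p => p.toTree.leaves).sum := by
  cases ps with
  | nil => exact absurd rfl h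
  | cons p ps =>
      rw [OGame.toTree_mk, List.map_cons, RTree.leaves_cons]
      simp [List.map_map, Function.comp_def]

theorem PGame.leaves_eq {os : List OGame} (h : os ≠ []) :
    (PGame.mk os).toTree.leaves = (os.map fun o => o.toTree.leaves).sum := by
  cases os with
  | nil => exact absurd rfl h
  | cons o os =>
      rw [PGame.toTree_mk, List.map_cons, RTree.leaves_cons]
      simp [List.map_map, Function.comp_def]

theorem OGame.leaves_nil : (OGame.mk []).toTree.leaves = 1 := by
  rw [OGame.toTree_mk]; simp [RTree.leaves_nil]

theorem PGame.leaves_nil : (PGame.mk []).toTree.leaves = 1 := by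
  rw [PGame.toTree_mk]; simp [RTree.leaves_nil]

theorem OGame.leaves_pos (o : OGame) : 0 < o.toTree.leaves := RTree.leaves_pos _
theorem PGame.leaves_pos (p : PGame) : 0 < p.toTree.leaves := RTree.leaves_pos _

theorem OGame.depth_eq (ps : List PGame) :
    (OGame.mk ps).toTree.depth = (ps.map fun p => p.toTree.depth + 1).foldr max 0 := by
  rw [OGame.toTree_mk, RTree.depth_node]; simp [List.map_map, Function.comp_def]

theorem PGame.depth_eq (os : List OGame) :
    (PGame.mk os).toTree.depth = (os.map fun o => o.toTree.depth + 1).foldr max 0 := by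
  rw [PGame.toTree_mk, RTree.depth_node]; simp [List.map_map, Function.comp_def]

theorem OGame.depth_child {p : PGame} {ps : List PGame} (h : p ∈ ps) :
    p.toTree.depth + 1 ≤ (OGame.mk ps).toTree.depth := by
  rw [OGame.depth_eq]; exact le_foldr_max (List.mem_map_of_mem h)

theorem PGame.depth_child {o : OGame} {os : List OGame} (h : o ∈ os) :
    o.toTree.depth + 1 ≤ (PGame.mk os).toTree.depth := by
  rw [PGame.depth_eq]; exact le_foldr_max (List.mem_map_of_mem h)

/-! ### Tensor bounds: opponent height -/

mutual
theorem otimes_oh : ∀ (o o' : OGame), (otimes o o').oh ≤ o.oh + o'.oh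
  | .mk ps, .mk qs => by
      rw [otimes_mk, OGame.oh_mk]
      apply foldr_max_le
      intro x hx
      rw [List.map_append, List.mem_append] at hx
      rcases hx with hx | hx <;> rw [List.map_map, List.mem_map] at hx
      · obtain ⟨p, hp, rfl⟩ := hx
        have h1 := oxl_oh p (.mk qs)
        have h2 := OGame.oh_child hp
        simp only [Function.comp_apply]
        omega
      · obtain ⟨q, hq, rfl⟩ := hx
        have h1 := oxr_oh (.mk ps) q
        have h2 := OGame.oh_child hq
        simp only [Function.comp_apply]
        omega
  termination_by o o' => sizeOf o + sizeOf o'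
  decreasing_by
  · have := List.sizeOf_lt_of_mem hp; simp_all; omega
  · have := List.sizeOf_lt_of_mem hq; simp_all; omega

theorem oxr_oh : ∀ (o : OGame) (p : PGame), (oxr o p).oh ≤ o.oh + p.oh
  | o, .mk os => by
      rw [oxr_mk, PGame.oh_mk]
      apply foldr_max_le
      intro x hx
      rw [List.map_map, List.mem_map] at hx
      obtain ⟨oj, hoj, rfl⟩ := hx
      have h1 := otimes_oh o oj
      have h2 := PGame.oh_child hoj
      simp only [Function.comp_apply]
      omega
  termination_by o p => sizeOf o + sizeOf p
  decreasing_by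
  · have := List.sizeOf_lt_of_mem hoj; simp_all; omega

theorem oxl_oh : ∀ (p : PGame) (o' : OGame), (oxl p o').oh ≤ p.oh + o'.oh
  | .mk os, o' => by
      rw [oxl_mk, PGame.oh_mk]
      apply foldr_max_le
      intro x hx
      rw [List.map_map, List.mem_map] at hx
      obtain ⟨oj, hoj, rfl⟩ := hx
      have h1 := otimes_oh oj o'
      have h2 := PGame.oh_child hoj
      simp only [Function.comp_apply]
      omega
  termination_by p o => sizeOf p + sizeOf o
  decreasing_by
  · have := List.sizeOf_lt_of_mem hoj; simp_all; omega
end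
/-! ### Tensor bounds: depth -/

mutual
theorem otimes_depth : ∀ (o o' : OGame),
    (otimes o o').toTree.depth ≤ o.toTree.depth + o'.toTree.depth
  | .mk ps, .mk qs => by
      rw [otimes_mk, OGame.depth_eq]
      apply foldr_max_le
      intro x hx
      rw [List.map_append, List.mem_append] at hx
      rcases hx with hx | hx <;> rw [List.map_map, List.mem_map] at hx
      · obtain ⟨p, hp, rfl⟩ := hx
        have h1 := oxl_depth p (.mk qs)
        have h2 := OGame.depth_child hp
        simp only [Function.comp_apply]
        omega
      · obtain ⟨q, hq, rfl⟩ := hx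
        have h1 := oxr_depth (.mk ps) q
        have h2 := OGame.depth_child hq
        simp only [Function.comp_apply]
        omega
  termination_by o o' => sizeOf o + sizeOf o'
  decreasing_by
  · have := List.sizeOf_lt_of_mem hp; simp_all; omega
  · have := List.sizeOf_lt_of_mem hq; simp_all; omega

theorem oxr_depth : ∀ (o : OGame) (p : PGame),
    (oxr o p).toTree.depth ≤ o.toTree.depth + p.toTree.depth
  | o, .mk os => by
      rw [oxr_mk, PGame.depth_eq]
      apply foldr_max_le
      intro x hx
      rw [List.map_map, List.mem_map] at hx
      obtain ⟨oj, hoj, rfl⟩ := hx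
      have h1 := otimes_depth o oj
      have h2 := PGame.depth_child hoj
      simp only [Function.comp_apply]
      omega
  termination_by o p => sizeOf o + sizeOf p
  decreasing_by
  · have := List.sizeOf_lt_of_mem hoj; simp_all; omega

theorem oxl_depth : ∀ (p : PGame) (o' : OGame),
    (oxl p o').toTree.depth ≤ p.toTree.depth + o'.toTree.depth
  | .mk os, o' => by
      rw [oxl_mk, PGame.depth_eq]
      apply foldr_max_le
      intro x hx
      rw [List.map_map, List.mem_map] at hx
      obtain ⟨oj, hoj, rfl⟩ := hx
      have h1 := otimes_depth oj o'
      have h2 := PGame.depth_child hoj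
      simp only [Function.comp_apply]
      omega
  termination_by p o => sizeOf p + sizeOf o
  decreasing_by
  · have := List.sizeOf_lt_of_mem hoj; simp_all; omega
end

/-! ### Tensor bounds: leaves (binomial interleaving bound) -/

mutual
theorem otimes_leaves : ∀ (o o' : OGame),
    (otimes o o').toTree.leaves * o.oh.factorial * o'.oh.factorial
      ≤ (o.oh + o'.oh).factorial * (o.toTree.leaves * o'.toTree.leaves)
  | .mk ps, .mk qs => by
      by_cases hps : ps = []
      · by_cases hqs : qs = []
        · subst hps; subst hqs
          rw [otimes_mk]
          simp [OGame.leaves_nil, OGame.oh_mk]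
        · exact otimes_leaves_main ps qs (Or.inr hqs)
      · exact otimes_leaves_main ps qs (Or.inl hps)
  termination_by o o' => sizeOf o + sizeOf o' + 1
  decreasing_by all_goals omega

theorem otimes_leaves_main : ∀ (ps qs : List PGame), (ps ≠ [] ∨ qs ≠ []) →
    (otimes (.mk ps) (.mk qs)).toTree.leaves * (OGame.mk ps).oh.factorial *
        (OGame.mk qs).oh.factorial
      ≤ ((OGame.mk ps).oh + (OGame.mk qs).oh).factorial *
        ((OGame.mk ps).toTree.leaves * (OGame.mk qs).toTree.leaves)
  | ps, qs, hor => by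
      set a := (OGame.mk ps).oh with hadef
      set b := (OGame.mk qs).oh with hbdef
      set Lp := (OGame.mk ps).toTree.leaves with hLpdef
      set Lq := (OGame.mk qs).toTree.leaves with hLqdef
      have hab : 1 ≤ a + b := by
        rcases hor with h | h
        · obtain ⟨p0, hp0⟩ := List.exists_mem_of_ne_nil ps h
          have := OGame.oh_child hp0; omega
        · obtain ⟨q0, hq0⟩ := List.exists_mem_of_ne_nil qs h
          have := OGame.oh_child hq0; omega
      have happ : (ps.map fun p => oxl p (OGame.mk qs)) ++
          (qs.map fun q => oxr (OGame.mk ps) q) ≠ [] := by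
        rcases hor with h | h <;> simp [h]
      have hL : (otimes (.mk ps) (.mk qs)).toTree.leaves =
          (ps.map fun p => (oxl p (OGame.mk qs)).toTree.leaves).sum +
          (qs.map fun q => (oxr (OGame.mk ps) q).toTree.leaves).sum := by
        rw [otimes_mk, OGame.leaves_eq happ, List.map_append, List.sum_append,
          List.map_map, List.map_map]
        rfl
      set S1 := (ps.map fun p => (oxl p (OGame.mk qs)).toTree.leaves).sum with hS1
      set S2 := (qs.map fun q => (oxr (OGame.mk ps) q).toTree.leaves).sum with hS2
      have claim1 : S1 * (a.factorial * b.factorial) * (a + b)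
          ≤ a * ((a + b).factorial * (Lp * Lq)) := by
        by_cases hpsn : ps = []
        · simp [hS1, hpsn]
        · obtain ⟨p0, hp0⟩ := List.exists_mem_of_ne_nil ps hpsn
          have ha1 : 1 ≤ a := by have := OGame.oh_child hp0; omega
          obtain ⟨a', ha'⟩ : ∃ a', a = a' + 1 := ⟨a - 1, by omega⟩
          have hstep : S1 * (a'.factorial * b.factorial)
              ≤ Lp * ((a' + b).factorial * Lq) := by
            rw [hS1, ← List.sum_map_mul_right]
            calc (ps.map fun p =>
                    (oxl p (OGame.mk qs)).toTree.leaves *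
                      (a'.factorial * b.factorial)).sum
                ≤ (ps.map fun p =>
                    p.toTree.leaves * ((a' + b).factorial * Lq)).sum := by
                  apply List.sum_le_sum
                  intro p hp
                  have hple : p.oh ≤ a' := by
                    have := OGame.oh_child hp; omega
                  have key := upgrade₁ (oxl_leaves p (OGame.mk qs)) hple
                  calc (oxl p (OGame.mk qs)).toTree.leaves *
                        (a'.factorial * b.factorial)
                      = (oxl p (OGame.mk qs)).toTree.leaves * a'.factorial *
                          b.factorial := by ring
                    _ ≤ (a' + b).factorial * (p.toTree.leaves * Lq) := key
                    _ = p.toTree.leaves * ((a' + b).factorial * Lq) := by ring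
              _ = (ps.map fun p => p.toTree.leaves).sum *
                    ((a' + b).factorial * Lq) := by rw [List.sum_map_mul_right]
              _ = Lp * ((a' + b).factorial * Lq) := by
                  rw [hLpdef, OGame.leaves_eq hpsn]
          have hfa : a.factorial = a * a'.factorial := by
            rw [ha', Nat.factorial_succ]
          have hfab : (a + b).factorial = (a + b) * (a' + b).factorial := by
            rw [ha', show a' + 1 + b = (a' + b) + 1 by ring, Nat.factorial_succ]
          calc S1 * (a.factorial * b.factorial) * (a + b)
              = (S1 * (a'.factorial * b.factorial)) * (a * (a + b)) := by
                rw [hfa]; ring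
            _ ≤ (Lp * ((a' + b).factorial * Lq)) * (a * (a + b)) :=
                Nat.mul_le_mul_right _ hstep
            _ = a * (((a + b) * (a' + b).factorial) * (Lp * Lq)) := by ring
            _ = a * ((a + b).factorial * (Lp * Lq)) := by rw [← hfab]
      have claim2 : S2 * (a.factorial * b.factorial) * (a + b)
          ≤ b * ((a + b).factorial * (Lp * Lq)) := by
        by_cases hqsn : qs = []
        · simp [hS2, hqsn]
        · obtain ⟨q0, hq0⟩ := List.exists_mem_of_ne_nil qs hqsn
          have hb1 : 1 ≤ b := by have := OGame.oh_child hq0; omega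
          obtain ⟨b', hb'⟩ : ∃ b', b = b' + 1 := ⟨b - 1, by omega⟩
          have hstep : S2 * (a.factorial * b'.factorial)
              ≤ Lq * ((a + b').factorial * Lp) := by
            rw [hS2, ← List.sum_map_mul_right]
            calc (qs.map fun q =>
                    (oxr (OGame.mk ps) q).toTree.leaves *
                      (a.factorial * b'.factorial)).sum
                ≤ (qs.map fun q =>
                    q.toTree.leaves * ((a + b').factorial * Lp)).sum := by
                  apply List.sum_le_sum
                  intro q hq
                  have hqle : q.oh ≤ b' := by
                    have := OGame.oh_child hq; omega
                  have key := upgrade₂ (oxr_leaves (OGame.mk ps) q) hqle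
                  calc (oxr (OGame.mk ps) q).toTree.leaves *
                        (a.factorial * b'.factorial)
                      = (oxr (OGame.mk ps) q).toTree.leaves * a.factorial *
                          b'.factorial := by ring
                    _ ≤ (a + b').factorial * (Lp * q.toTree.leaves) := key
                    _ = q.toTree.leaves * ((a + b').factorial * Lp) := by ring
              _ = (qs.map fun q => q.toTree.leaves).sum *
                    ((a + b').factorial * Lp) := by rw [List.sum_map_mul_right]
              _ = Lq * ((a + b').factorial * Lp) := by
                  rw [hLqdef, OGame.leaves_eq hqsn]
          have hfb : b.factorial = b * b'.factorial := by
            rw [hb', Nat.factorial_succ]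
          have hfab : (a + b).factorial = (a + b) * (a + b').factorial := by
            rw [hb', show a + (b' + 1) = (a + b') + 1 by ring, Nat.factorial_succ]
          calc S2 * (a.factorial * b.factorial) * (a + b)
              = (S2 * (a.factorial * b'.factorial)) * (b * (a + b)) := by
                rw [hfb]; ring
            _ ≤ (Lq * ((a + b').factorial * Lp)) * (b * (a + b)) :=
                Nat.mul_le_mul_right _ hstep
            _ = b * (((a + b) * (a + b').factorial) * (Lp * Lq)) := by ring
            _ = b * ((a + b).factorial * (Lp * Lq)) := by rw [← hfab]
      have key : ((otimes (.mk ps) (.mk qs)).toTree.leaves * a.factorial * b.factorial)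
            * (a + b) ≤ ((a + b).factorial * (Lp * Lq)) * (a + b) := by
        calc ((otimes (.mk ps) (.mk qs)).toTree.leaves * a.factorial * b.factorial) * (a + b)
            = S1 * (a.factorial * b.factorial) * (a + b) +
              S2 * (a.factorial * b.factorial) * (a + b) := by rw [hL]; ring
          _ ≤ a * ((a + b).factorial * (Lp * Lq)) + b * ((a + b).factorial * (Lp * Lq)) :=
              Nat.add_le_add claim1 claim2
          _ = ((a + b).factorial * (Lp * Lq)) * (a + b) := by ring
      exact Nat.le_of_mul_le_mul_right key (by omega)
  termination_by ps qs _ => sizeOf (OGame.mk ps) + sizeOf (OGame.mk qs)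
  decreasing_by
  all_goals first
    | (have := List.sizeOf_lt_of_mem hp; simp_all; omega)
    | (have := List.sizeOf_lt_of_mem hq; simp_all; omega)

theorem oxr_leaves : ∀ (o : OGame) (p : PGame),
    (oxr o p).toTree.leaves * o.oh.factorial * p.oh.factorial
      ≤ (o.oh + p.oh).factorial * (o.toTree.leaves * p.toTree.leaves)
  | o, .mk os => by
      by_cases hne : os = []
      · subst hne
        rw [oxr_mk]
        simp only [List.map_nil, PGame.leaves_nil, PGame.oh_mk, List.foldr_nil,
          Nat.factorial_zero, Nat.add_zero, Nat.mul_one, Nat.one_mul]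
        exact Nat.le_mul_of_pos_right _ (OGame.leaves_pos o)
      · have hL : (oxr o (.mk os)).toTree.leaves
            = (os.map fun oj => (otimes o oj).toTree.leaves).sum := by
          rw [oxr_mk, PGame.leaves_eq (by simp [hne]), List.map_map]
          rfl
        rw [hL, PGame.leaves_eq hne]
        calc (os.map fun oj => (otimes o oj).toTree.leaves).sum * o.oh.factorial *
              (PGame.mk os).oh.factorial
            = (os.map fun oj => (otimes o oj).toTree.leaves).sum *
                (o.oh.factorial * (PGame.mk os).oh.factorial) := by ring
          _ = (os.map fun oj => (otimes o oj).toTree.leaves *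
                (o.oh.factorial * (PGame.mk os).oh.factorial)).sum := by
              rw [List.sum_map_mul_right]
          _ ≤ (os.map fun oj => oj.toTree.leaves *
                ((o.oh + (PGame.mk os).oh).factorial * o.toTree.leaves)).sum := by
              apply List.sum_le_sum
              intro oj hoj
              have key := upgrade₂ (otimes_leaves o oj) (PGame.oh_child hoj)
              calc (otimes o oj).toTree.leaves *
                    (o.oh.factorial * (PGame.mk os).oh.factorial)
                  = (otimes o oj).toTree.leaves * o.oh.factorial *
                      (PGame.mk os).oh.factorial := by ring
                _ ≤ (o.oh + (PGame.mk os).oh).factorial *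
                      (o.toTree.leaves * oj.toTree.leaves) := key
                _ = oj.toTree.leaves *
                      ((o.oh + (PGame.mk os).oh).factorial * o.toTree.leaves) := by ring
          _ = (os.map fun oj => oj.toTree.leaves).sum *
                ((o.oh + (PGame.mk os).oh).factorial * o.toTree.leaves) := by
              rw [List.sum_map_mul_right]
          _ = (o.oh + (PGame.mk os).oh).factorial *
                (o.toTree.leaves * (os.map fun oj => oj.toTree.leaves).sum) := by ring
  termination_by o p => sizeOf o + sizeOf p
  decreasing_by
  · have := List.sizeOf_lt_of_mem hoj; simp_all; omega

theorem oxl_leaves : ∀ (p : PGame) (o' : OGame),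
    (oxl p o').toTree.leaves * p.oh.factorial * o'.oh.factorial
      ≤ (p.oh + o'.oh).factorial * (p.toTree.leaves * o'.toTree.leaves)
  | .mk os, o' => by
      by_cases hne : os = []
      · subst hne
        rw [oxl_mk]
        simp only [List.map_nil, PGame.leaves_nil, PGame.oh_mk, List.foldr_nil,
          Nat.factorial_zero, Nat.zero_add, Nat.mul_one, Nat.one_mul]
        exact Nat.le_mul_of_pos_right _ (OGame.leaves_pos o')
      · have hL : (oxl (.mk os) o').toTree.leaves
            = (os.map fun oj => (otimes oj o').toTree.leaves).sum := by
          rw [oxl_mk, PGame.leaves_eq (by simp [hne]), List.map_map]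
          rfl
        rw [hL, PGame.leaves_eq hne]
        calc (os.map fun oj => (otimes oj o').toTree.leaves).sum *
              (PGame.mk os).oh.factorial * o'.oh.factorial
            = (os.map fun oj => (otimes oj o').toTree.leaves).sum *
                ((PGame.mk os).oh.factorial * o'.oh.factorial) := by ring
          _ = (os.map fun oj => (otimes oj o').toTree.leaves *
                ((PGame.mk os).oh.factorial * o'.oh.factorial)).sum := by
              rw [List.sum_map_mul_right]
          _ ≤ (os.map fun oj => oj.toTree.leaves *
                (((PGame.mk os).oh + o'.oh).factorial * o'.toTree.leaves)).sum := by
              apply List.sum_le_sum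
              intro oj hoj
              have key := upgrade₁ (otimes_leaves oj o') (PGame.oh_child hoj)
              calc (otimes oj o').toTree.leaves *
                    ((PGame.mk os).oh.factorial * o'.oh.factorial)
                  = (otimes oj o').toTree.leaves * (PGame.mk os).oh.factorial *
                      o'.oh.factorial := by ring
                _ ≤ ((PGame.mk os).oh + o'.oh).factorial *
                      (oj.toTree.leaves * o'.toTree.leaves) := key
                _ = oj.toTree.leaves *
                      (((PGame.mk os).oh + o'.oh).factorial * o'.toTree.leaves) := by ring
          _ = (os.map fun oj => oj.toTree.leaves).sum *
                (((PGame.mk os).oh + o'.oh).factorial * o'.toTree.leaves) := by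
              rw [List.sum_map_mul_right]
          _ = ((PGame.mk os).oh + o'.oh).factorial *
                ((os.map fun oj => oj.toTree.leaves).sum * o'.toTree.leaves) := by ring
  termination_by p o => sizeOf p + sizeOf o
  decreasing_by
  · have := List.sizeOf_lt_of_mem hoj; simp_all; omega
end
/-! ### Folded tensor bounds -/

theorem oh_mk_single (x : PGame) : (OGame.mk [x]).oh = x.oh + 1 := by
  rw [OGame.oh_mk]; simp

theorem leaves_mk_single (x : PGame) :
    (OGame.mk [x]).toTree.leaves = x.toTree.leaves := by
  rw [OGame.leaves_eq (by simp)]; simp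

theorem depth_mk_single (x : PGame) :
    (OGame.mk [x]).toTree.depth = x.toTree.depth + 1 := by
  rw [OGame.depth_eq]; simp

theorem foldl_otimes_oh : ∀ (l : List OGame) (X : OGame),
    (List.foldl otimes X l).oh ≤ X.oh + (l.map OGame.oh).sum
  | [], X => by simp
  | Q :: l, X => by
      simp only [List.foldl_cons, List.map_cons, List.sum_cons]
      have h1 := foldl_otimes_oh l (otimes X Q)
      have h2 := otimes_oh X Q
      omega

theorem foldl_otimes_depth : ∀ (l : List OGame) (X : OGame),
    (List.foldl otimes X l).toTree.depth ≤ X.toTree.depth + (l.map fun Q => Q.toTree.depth).sum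
  | [], X => by simp
  | Q :: l, X => by
      simp only [List.foldl_cons, List.map_cons, List.sum_cons]
      have h1 := foldl_otimes_depth l (otimes X Q)
      have h2 := otimes_depth X Q
      omega

theorem foldl_otimes_leaves : ∀ (l : List OGame) (X : OGame),
    (List.foldl otimes X l).toTree.leaves * X.oh.factorial *
        (l.map fun Q => Q.oh.factorial).prod
      ≤ (X.oh + (l.map OGame.oh).sum).factorial *
          (X.toTree.leaves * (l.map fun Q => Q.toTree.leaves).prod)
  | [], X => by simp [Nat.mul_comm]
  | Q :: l, X => by
      simp only [List.foldl_cons, List.map_cons, List.sum_cons, List.prod_cons]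
      have IH := foldl_otimes_leaves l (otimes X Q)
      have hA := otimes_leaves X Q
      have hoh := otimes_oh X Q
      have h3 : ((otimes X Q).oh + (l.map OGame.oh).sum).factorial * (X.oh + Q.oh).factorial
          ≤ ((X.oh + Q.oh) + (l.map OGame.oh).sum).factorial * (otimes X Q).oh.factorial :=
        fact_mul_fact_le _ hoh
      have key : ((List.foldl otimes (otimes X Q) l).toTree.leaves * X.oh.factorial *
            (Q.oh.factorial * (l.map fun Q => Q.oh.factorial).prod)) * (otimes X Q).oh.factorial
          ≤ ((X.oh + (Q.oh + (l.map OGame.oh).sum)).factorial *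
            (X.toTree.leaves * (Q.toTree.leaves * (l.map fun Q => Q.toTree.leaves).prod)))
              * (otimes X Q).oh.factorial := by
        calc ((List.foldl otimes (otimes X Q) l).toTree.leaves * X.oh.factorial *
              (Q.oh.factorial * (l.map fun Q => Q.oh.factorial).prod)) * (otimes X Q).oh.factorial
            = ((List.foldl otimes (otimes X Q) l).toTree.leaves * (otimes X Q).oh.factorial *
                (l.map fun Q => Q.oh.factorial).prod) * (X.oh.factorial * Q.oh.factorial) := by
              ring
          _ ≤ (((otimes X Q).oh + (l.map OGame.oh).sum).factorial *
                ((otimes X Q).toTree.leaves * (l.map fun Q => Q.toTree.leaves).prod)) *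
                (X.oh.factorial * Q.oh.factorial) := Nat.mul_le_mul_right _ IH
          _ = ((otimes X Q).oh + (l.map OGame.oh).sum).factorial *
                ((otimes X Q).toTree.leaves * X.oh.factorial * Q.oh.factorial) *
                (l.map fun Q => Q.toTree.leaves).prod := by ring
          _ ≤ ((otimes X Q).oh + (l.map OGame.oh).sum).factorial *
                ((X.oh + Q.oh).factorial * (X.toTree.leaves * Q.toTree.leaves)) *
                (l.map fun Q => Q.toTree.leaves).prod := by
              exact Nat.mul_le_mul_right _ (Nat.mul_le_mul_left _ hA)
          _ = (((otimes X Q).oh + (l.map OGame.oh).sum).factorial * (X.oh + Q.oh).factorial) *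
                (X.toTree.leaves * Q.toTree.leaves * (l.map fun Q => Q.toTree.leaves).prod) := by
              ring
          _ ≤ (((X.oh + Q.oh) + (l.map OGame.oh).sum).factorial * (otimes X Q).oh.factorial) *
                (X.toTree.leaves * Q.toTree.leaves * (l.map fun Q => Q.toTree.leaves).prod) :=
              Nat.mul_le_mul_right _ h3
          _ = ((X.oh + (Q.oh + (l.map OGame.oh).sum)).factorial *
                (X.toTree.leaves * (Q.toTree.leaves * (l.map fun Q => Q.toTree.leaves).prod)))
                  * (otimes X Q).oh.factorial := by
              rw [show (X.oh + Q.oh) + (l.map OGame.oh).sum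
                  = X.oh + (Q.oh + (l.map OGame.oh).sum) by ring]
              ring
      exact Nat.le_of_mul_le_mul_right key (otimes X Q).oh.factorial_pos

/-! ### Bounds for the exponential -/

mutual
theorem bang_oh : ∀ (o : OGame), (bang o).oh ≤ o.eo
  | .mk [] => by rw [bang_nil, OGame.oh_mk]; simp
  | .mk (p :: ps) => by
      rw [bang_cons]
      refine le_trans (foldl_otimes_oh _ _) ?_
      rw [oh_mk_single, OGame.eo_mk, List.map_map]
      have h1 := bang'_oh p
      have h2 : (ps.map (OGame.oh ∘ fun q => OGame.mk [bang' q])).sum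
          ≤ (ps.map fun q => q.eo + 1).sum := by
        apply List.sum_le_sum
        intro q hq
        simp only [Function.comp_apply, oh_mk_single]
        have := bang'_oh q
        omega
      rw [sum_map_add_ones] at h2
      simp only [List.map_cons, List.sum_cons, List.length_cons]
      omega
  termination_by o => sizeOf o
  decreasing_by
  all_goals first
    | (have := List.sizeOf_lt_of_mem hq; simp_all; omega)
    | (simp_all; omega)

theorem bang'_oh : ∀ (p : PGame), (bang' p).oh ≤ p.eo
  | .mk os => by
      rw [bang'_mk, PGame.oh_mk, PGame.eo_mk, List.map_map]
      apply foldr_max_le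
      intro x hx
      rw [List.mem_map] at hx
      obtain ⟨o, ho, rfl⟩ := hx
      have h1 := bang_oh o
      have h2 : o.eo ≤ (os.map OGame.eo).sum := le_sum_of_mem (List.mem_map_of_mem ho)
      simpa using le_trans h1 h2
  termination_by p => sizeOf p
  decreasing_by
  · have := List.sizeOf_lt_of_mem ho; simp_all; omega
end

theorem sum_two_eo : ∀ (ps : List PGame),
    (ps.map fun q => 2 * q.eo + 2).sum = 2 * (ps.map PGame.eo).sum + 2 * ps.length
  | [] => by simp
  | r :: rs => by
      simp only [List.map_cons, List.sum_cons, List.length_cons, sum_two_eo rs]; ring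

mutual
theorem bang_depth : ∀ (o : OGame), (bang o).toTree.depth ≤ 2 * o.eo
  | .mk [] => by rw [bang_nil, OGame.depth_eq]; simp
  | .mk (p :: ps) => by
      rw [bang_cons]
      refine le_trans (foldl_otimes_depth _ _) ?_
      rw [depth_mk_single, OGame.eo_mk, List.map_map]
      have h1 := bang'_depth p
      have h2 : (ps.map ((fun Q => Q.toTree.depth) ∘ fun q => OGame.mk [bang' q])).sum
          ≤ (ps.map fun q => 2 * q.eo + 2).sum := by
        apply List.sum_le_sum
        intro q hq
        simp only [Function.comp_apply, depth_mk_single]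
        have := bang'_depth q
        omega
      have h3 := sum_two_eo ps
      simp only [List.map_cons, List.sum_cons, List.length_cons]
      omega
  termination_by o => sizeOf o
  decreasing_by
  all_goals first
    | (have := List.sizeOf_lt_of_mem hq; simp_all; omega)
    | (simp_all; omega)

theorem bang'_depth : ∀ (p : PGame), (bang' p).toTree.depth ≤ 2 * p.eo + 1
  | .mk os => by
      rw [bang'_mk, PGame.depth_eq, PGame.eo_mk, List.map_map]
      apply foldr_max_le
      intro x hx
      rw [List.mem_map] at hx
      obtain ⟨o, ho, rfl⟩ := hx
      have h1 := bang_depth o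
      have h2 : o.eo ≤ (os.map OGame.eo).sum := le_sum_of_mem (List.mem_map_of_mem ho)
      simp only [Function.comp_apply]
      omega
  termination_by p => sizeOf p
  decreasing_by
  · have := List.sizeOf_lt_of_mem ho; simp_all; omega
end
mutual
theorem bang_leaves : ∀ (o : OGame) (M : ℕ), 1 ≤ M → o.ep ≤ M →
    (bang o).toTree.leaves ≤ o.eo.factorial * M ^ o.eo
  | .mk [], M, hM, _ => by
      rw [bang_nil]
      simp [OGame.leaves_nil, OGame.eo_mk]
  | .mk (p :: ps), M, hM, hep => by
      have hepq : ∀ q ∈ p :: ps, q.ep ≤ M := by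
        intro q hq
        have h1 : q.ep ≤ ((p :: ps).map PGame.ep).sum :=
          le_sum_of_mem (List.mem_map_of_mem hq)
        rw [OGame.ep_mk] at hep
        omega
      have key := foldl_otimes_leaves (ps.map fun q => OGame.mk [bang' q]) (OGame.mk [bang' p])
      simp only [List.map_map, Function.comp_def, oh_mk_single, leaves_mk_single] at key
      set E := (OGame.mk (p :: ps)).eo with hE
      have hEe : ((p :: ps).map fun q => q.eo + 1).sum = E := by
        rw [sum_map_add_ones, hE, OGame.eo_mk]; omega
      set S := ((p :: ps).map fun q => (bang' q).oh + 1).sum with hS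
      set Pf := ((p :: ps).map fun q => ((bang' q).oh + 1).factorial).prod with hPf
      have key' : (bang (OGame.mk (p :: ps))).toTree.leaves * Pf
          ≤ S.factorial * ((p :: ps).map fun q => (bang' q).toTree.leaves).prod := by
        rw [bang_cons, hPf, hS]
        simp only [List.map_cons, List.prod_cons, List.sum_cons]
        rw [← Nat.mul_assoc]
        exact key
      have hLq : ((p :: ps).map fun q => (bang' q).toTree.leaves).prod
          ≤ ((p :: ps).map fun q => q.eo.factorial * M ^ (q.eo + 1)).prod := by
        apply prod_le_prod_of_le
        intro q hq
        have h1 := bang'_leaves q M hM (hepq q hq)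
        calc (bang' q).toTree.leaves ≤ q.eo.factorial * M ^ q.eo * M := h1
          _ = q.eo.factorial * M ^ (q.eo + 1) := by rw [pow_succ]; ring
      have hprodpow : ((p :: ps).map fun q => q.eo.factorial * M ^ (q.eo + 1)).prod
          = ((p :: ps).map fun q => q.eo.factorial).prod * M ^ E := by
        rw [prod_map_mul_pow, hEe]
      have hpair : ∀ x ∈ (p :: ps).map fun q => ((bang' q).oh + 1, q.eo + 1), x.1 ≤ x.2 := by
        intro x hx
        rw [List.mem_map] at hx
        obtain ⟨q, hq2, rfl⟩ := hx
        have := bang'_oh q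
        simp only
        omega
      have hmm := multi_mono ((p :: ps).map fun q => ((bang' q).oh + 1, q.eo + 1)) hpair
      simp only [List.map_map, Function.comp_def] at hmm
      rw [hEe] at hmm
      have hfle : ((p :: ps).map fun q => q.eo.factorial).prod
          ≤ ((p :: ps).map fun q => (q.eo + 1).factorial).prod :=
        prod_le_prod_of_le _ _ _ (fun q _ => Nat.factorial_le (Nat.le_succ _))
      have final : (bang (OGame.mk (p :: ps))).toTree.leaves * Pf
          ≤ (E.factorial * M ^ E) * Pf := by
        calc (bang (OGame.mk (p :: ps))).toTree.leaves * Pf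
            ≤ S.factorial * ((p :: ps).map fun q => (bang' q).toTree.leaves).prod := key'
          _ ≤ S.factorial * ((p :: ps).map fun q => q.eo.factorial * M ^ (q.eo + 1)).prod :=
              Nat.mul_le_mul_left _ hLq
          _ = S.factorial * (((p :: ps).map fun q => q.eo.factorial).prod * M ^ E) := by
              rw [hprodpow]
          _ ≤ S.factorial * (((p :: ps).map fun q => (q.eo + 1).factorial).prod * M ^ E) :=
              Nat.mul_le_mul_left _ (Nat.mul_le_mul_right _ hfle)
          _ = (S.factorial * ((p :: ps).map fun q => (q.eo + 1).factorial).prod) * M ^ E := by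
              ring
          _ ≤ (E.factorial * Pf) * M ^ E := Nat.mul_le_mul_right _ hmm
          _ = (E.factorial * M ^ E) * Pf := by ring
      exact Nat.le_of_mul_le_mul_right final (prod_fact_pos _ _)
  termination_by o => sizeOf o
  decreasing_by
  all_goals (have := List.sizeOf_lt_of_mem hq; simp_all; omega)

theorem bang'_leaves : ∀ (p : PGame) (M : ℕ), 1 ≤ M → p.ep ≤ M →
    (bang' p).toTree.leaves ≤ p.eo.factorial * M ^ p.eo * M
  | .mk os, M, hM, hep => by
      by_cases hne : os = []
      · subst hne
        rw [bang'_mk]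
        simp only [List.map_nil, PGame.leaves_nil, PGame.eo_mk, List.sum_nil,
          Nat.factorial_zero, pow_zero, Nat.one_mul]
        simpa using hM
      · have hL : (bang' (.mk os)).toTree.leaves
            = (os.map fun o => (bang o).toTree.leaves).sum := by
          rw [bang'_mk, PGame.leaves_eq (by simp [hne]), List.map_map]
          rfl
        rw [hL, PGame.eo_mk]
        set E := (os.map OGame.eo).sum with hE
        have hbound : ∀ o ∈ os, (bang o).toTree.leaves ≤ E.factorial * M ^ E := by
          intro o ho
          have hepo : o.ep ≤ M := by
            rw [PGame.ep_mk] at hep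
            have := le_sum_of_mem (List.mem_map_of_mem (f := OGame.ep) ho)
            omega
          have h1 := bang_leaves o M hM hepo
          have h2 : o.eo ≤ E := le_sum_of_mem (List.mem_map_of_mem ho)
          calc (bang o).toTree.leaves ≤ o.eo.factorial * M ^ o.eo := h1
            _ ≤ E.factorial * M ^ E :=
                Nat.mul_le_mul (Nat.factorial_le h2) (Nat.pow_le_pow_right hM h2)
        have hlen : os.length ≤ M := by
          rw [PGame.ep_mk] at hep; omega
        calc (os.map fun o => (bang o).toTree.leaves).sum
            ≤ os.length * (E.factorial * M ^ E) := sum_map_le_length_mul hbound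
          _ ≤ M * (E.factorial * M ^ E) := Nat.mul_le_mul_right _ hlen
          _ = E.factorial * M ^ E * M := by ring
  termination_by p => sizeOf p
  decreasing_by
  · have := List.sizeOf_lt_of_mem ho; simp_all; omega
end
/-- for e_p[G] > 0, leaves[!G] ≤ e_o[G]!·e_p[G]^{e_o[G]} and
e[!G] ≤ 2·e_o[G]·e_o[G]!·e_p[G]^{e_o[G]}. -/
theorem bang_size_bound (O : OGame) (h : 0 < O.ep) :
    (bang O).toTree.leaves ≤ Nat.factorial O.eo * O.ep ^ O.eo ∧
    (bang O).toTree.edges ≤ 2 * O.eo * Nat.factorial O.eo * O.ep ^ O.eo := by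
  have h1 := bang_leaves O O.ep h le_rfl
  refine ⟨h1, ?_⟩
  calc (bang O).toTree.edges
      ≤ (bang O).toTree.depth * (bang O).toTree.leaves :=
        RTree.edges_le_depth_mul_leaves _
    _ ≤ (2 * O.eo) * (O.eo.factorial * O.ep ^ O.eo) :=
        Nat.mul_le_mul (bang_depth O) h1
    _ = 2 * O.eo * O.eo.factorial * O.ep ^ O.eo := by ring
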